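/- Let $q \in \mathbb{C}$ with $q \ne 1$ and $q \ne -1/2$, suppose $2q \ne -n$ for every natural number $n$ and $2q \ne 1$, and suppose $\zeta(2q) \ne 0$ and $\varphi(2q) \ne 0$, where $\zeta$ is the Riemann zeta function and $\varphi(s) = 2\,(2\pi)^{-s}\,\Gamma(s)\,\cos(\pi s/2)$. Define $D_q = \frac{\log \zeta(2q) - q\,\log \zeta(2)}{1-q}$ using the principal complex logarithm. Then there exists an integer $k$ such that $\Big(\tfrac12 + q\Big) D_{1/2 - q} = (1-q)\,D_q + \log \varphi(2q) + \Big(2q - \tfrac12\Big)\log \zeta(2) + 2\pi i k.$ -/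
import Mathlib


open Complex

/-- The factor `φ(s) = 2 (2π)^{-s} Γ(s) cos(πs/2)` in the functional equation
`ζ(1-s) = φ(s) ζ(s)` of Riemann's zeta function. -/
noncomputable def phiFE (s : ℂ) : ℂ :=
  2 * (2 * (Real.pi : ℂ)) ^ (-s) * Complex.Gamma s * Complex.cos ((Real.pi : ℂ) * s / 2)

/-- The fractal exponent `D_q = (log ζ(2q) - q log ζ(2))/(1-q)` with the principal
complex logarithm. -/
noncomputable def fractalExponent (q : ℂ) : ℂ :=
  (Complex.log (riemannZeta (2 * q)) - q * Complex.log (riemannZeta 2)) / (1 - q)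

lemma log_mul_aux {x y : ℂ} (hx : x ≠ 0) (hy : y ≠ 0) :
    ∃ k : ℤ, Complex.log (x * y) = Complex.log x + Complex.log y + k * (2 * Real.pi * Complex.I) := by
  have h : Complex.exp (Complex.log (x * y)) = Complex.exp (Complex.log x + Complex.log y) := by
    rw [Complex.exp_add, Complex.exp_log (mul_ne_zero hx hy), Complex.exp_log hx,
      Complex.exp_log hy]
  exact Complex.exp_eq_exp_iff_exists_int.mp h

/-- the symmetry relation of the fractal exponent around `q = 1/4`
under `q ↦ 1/2 - q`, up to an integer multiple of `2πi` from branch ambiguity. -/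
theorem fractal_exponent_symmetry
    (q : ℂ) (hq1 : q ≠ 1) (hq2 : q ≠ -1/2)
    (hqn : ∀ n : ℕ, 2 * q ≠ -(n : ℂ)) (hq3 : 2 * q ≠ 1)
    (hζ : riemannZeta (2 * q) ≠ 0) (hφ : phiFE (2 * q) ≠ 0) :
    ∃ k : ℤ, (1/2 + q) * fractalExponent (1/2 - q) =
      (1 - q) * fractalExponent q + Complex.log (phiFE (2 * q))
        + (2 * q - 1/2) * Complex.log (riemannZeta 2)
        + 2 * Real.pi * Complex.I * k := by
  have hzeta : riemannZeta (1 - 2 * q) = phiFE (2 * q) * riemannZeta (2 * q) :=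
    riemannZeta_one_sub hqn hq3
  obtain ⟨k, hk⟩ := log_mul_aux hφ hζ
  refine ⟨k, ?_⟩
  have h1 : (1 : ℂ) - q ≠ 0 := by
    intro h; exact hq1 (by linear_combination -h)
  have h2 : (1 : ℂ)/2 + q ≠ 0 := by
    intro h; exact hq2 (by linear_combination h)
  have harg : 2 * ((1:ℂ)/2 - q) = 1 - 2 * q := by ring
  unfold fractalExponent
  rw [harg, hzeta, hk]
  have h3 : (1:ℂ) - (1/2 - q) = 1/2 + q := by ring
  rw [h3, mul_div_cancel₀ _ h2, mul_div_cancel₀ _ h1]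
  ring
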